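/- Let γ ∈ (0,1] and let α₁, α₂, …, α_d be distinct numbers in the interval (1/(1+γ), 1). For each j ∈ {1,…,d} let f_j : ℝ → ℝ be continuous and strictly C^{0,α_j} at every point of ℝ, and define f : ℝ^d → ℝ by f(x₁, …, x_d) = Σ_{j=1}^d f_j(x_j). Then for every C¹ curve c : [a,b] → ℝ^d of unit speed (‖c′(s)‖ = 1 for all s) satisfying ‖c′(s₂) − c′(s₁)‖ ≤ ρ|s₂ − s₁|^γ for all s₁, s₂ ∈ [a,b] (for some ρ ≥ 0), and for every s₀ ∈ (a,b), there exists α ∈ {α₁, α₂, …, α_d} such that f∘c is strictly C^{0,α} at s₀. -/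

import Mathlib

open Set Filter Topology

def StrictHolderAt (f : ℝ → ℝ) (I : Set ℝ) (α x₀ : ℝ) : Prop :=
  (∃ M : ℝ, ∀ᶠ x in 𝓝[I \ {x₀}] x₀, |f x - f x₀| / |x - x₀| ^ α ≤ M) ∧
  ∀ β : ℝ, α < β → ∀ M : ℝ, ∃ᶠ x in 𝓝[I \ {x₀}] x₀, M < |f x - f x₀| / |x - x₀| ^ β

lemma abs_apply_le_norm_euclidean {d : ℕ} (x : EuclideanSpace ℝ (Fin d)) (i : Fin d) :
    |x i| ≤ ‖x‖ := by
  rw [EuclideanSpace.norm_eq, ← Real.sqrt_sq (abs_nonneg (x i))]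
  apply Real.sqrt_le_sqrt
  rw [sq_abs]
  exact Finset.single_le_sum (f := fun j => ‖x j‖^2) (fun j _ => sq_nonneg _) (Finset.mem_univ i)
    |>.trans_eq' (by simp [Real.norm_eq_abs, sq_abs])

lemma holder_aux_between {p q z x δ w : ℝ} (hδ : 0 < δ) (hw : 0 < w)
    (hp : |p - z - (-δ) * w| ≤ w / 2 * δ) (hq : |q - z - δ * w| ≤ w / 2 * δ)
    (hx : |x - z| < w / 2 * δ) : p ≤ x ∧ x ≤ q := by
  rw [abs_le] at hp hq
  rw [abs_lt] at hx
  constructor <;> nlinarith [hp.1, hp.2, hq.1, hq.2, hx.1, hx.2]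

set_option maxHeartbeats 1000000 in
theorem sum_strictHolder_comp_curve_strictHolderAt {d : ℕ} (γ : ℝ)
    (hγ : γ ∈ Ioc (0 : ℝ) 1) (α : Fin d → ℝ) (hinj : Function.Injective α)
    (hα : ∀ j, α j ∈ Ioo (1 / (1 + γ)) 1) (f : Fin d → ℝ → ℝ)
    (hfc : ∀ j, Continuous (f j)) (hf : ∀ j x₀, StrictHolderAt (f j) univ (α j) x₀)
    (a b : ℝ) (c : ℝ → EuclideanSpace ℝ (Fin d)) (hc : ContDiffOn ℝ 1 c (Icc a b))
    (hunit : ∀ s ∈ Icc a b, ‖derivWithin c (Icc a b) s‖ = 1) (ρ : ℝ) (hρ : 0 ≤ ρ)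
    (hH : ∀ s₁ ∈ Icc a b, ∀ s₂ ∈ Icc a b,
      ‖derivWithin c (Icc a b) s₂ - derivWithin c (Icc a b) s₁‖ ≤ ρ * |s₂ - s₁| ^ γ)
    (s₀ : ℝ) (hs₀ : s₀ ∈ Ioo a b) :
    ∃ j : Fin d, StrictHolderAt
      ((fun x : EuclideanSpace ℝ (Fin d) => ∑ i, f i (x i)) ∘ c) (Icc a b) (α j) s₀ := by
  obtain ⟨hγ0, hγ1⟩ := hγ
  obtain ⟨has₀, hs₀b⟩ := hs₀
  have h1γ : (0:ℝ) < 1 + γ := by linarith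
  have hs₀I : s₀ ∈ Icc a b := ⟨has₀.le, hs₀b.le⟩
  set I := Icc a b with hIdef
  set v : EuclideanSpace ℝ (Fin d) := derivWithin c I s₀ with hvdef
  have hdiff : DifferentiableOn ℝ c I := hc.differentiableOn one_ne_zero
  have hderiv : ∀ s ∈ I, HasDerivWithinAt c (derivWithin c I s) I s :=
    fun s hs => (hdiff s hs).hasDerivWithinAt
  -- Lipschitz with constant 1
  have hlip : ∀ s₁ ∈ I, ∀ s₂ ∈ I, ‖c s₂ - c s₁‖ ≤ |s₂ - s₁| := by
    intro s₁ h₁ s₂ h₂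
    have := Convex.norm_image_sub_le_of_norm_hasDerivWithin_le hderiv
      (fun t ht => (hunit t ht).le) (convex_Icc a b) h₁ h₂
    simpa [Real.norm_eq_abs] using this
  -- Taylor bound
  have htay : ∀ s ∈ I, ‖c s - c s₀ - (s - s₀) • v‖ ≤ ρ * |s - s₀| ^ (1 + γ) := by
    intro s hs
    rcases eq_or_ne s s₀ with rfl | hne
    · simp [Real.zero_rpow h1γ.ne']
    have hKsub : uIcc s₀ s ⊆ I := uIcc_subset_Icc hs₀I hs
    have hg : ∀ t ∈ uIcc s₀ s,
        HasDerivWithinAt (fun t => c t - t • v) (derivWithin c I t - v) (uIcc s₀ s) t := by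
      intro t ht
      exact ((hderiv t (hKsub ht)).mono hKsub).sub
        (((hasDerivAt_id t).smul_const v).hasDerivWithinAt.congr_deriv (one_smul ℝ v))
    have hb : ∀ t ∈ uIcc s₀ s, ‖derivWithin c I t - v‖ ≤ ρ * |s - s₀| ^ γ := by
      intro t ht
      refine (hH s₀ hs₀I t (hKsub ht)).trans ?_
      have h1 : |t - s₀| ≤ |s - s₀| := by
        rw [uIcc_eq_union] at ht
        rcases ht with ht | ht <;> rw [abs_sub_le_iff] <;>
          constructor <;> cases' le_total s₀ s with h h <;>
          simp [Set.mem_Icc] at ht <;> linarith [abs_sub_le_iff.mp (le_refl |s - s₀|)]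
      exact mul_le_mul_of_nonneg_left
        (Real.rpow_le_rpow (abs_nonneg _) h1 hγ0.le) hρ
    have := Convex.norm_image_sub_le_of_norm_hasDerivWithin_le hg hb (convex_uIcc s₀ s)
      (left_mem_uIcc) (right_mem_uIcc)
    have heq : (c s - s • v) - (c s₀ - s₀ • v) = c s - c s₀ - (s - s₀) • v := by
      rw [sub_smul]; abel
    rw [heq] at this
    refine this.trans ?_
    rw [Real.norm_eq_abs, Real.rpow_add (abs_pos.mpr (sub_ne_zero.mpr hne)), Real.rpow_one]
    ring_nf
    exact le_refl _

  -- componentwise versions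
  have hlipc : ∀ s ∈ I, ∀ i, |c s i - c s₀ i| ≤ |s - s₀| := by
    intro s hs i
    have h := abs_apply_le_norm_euclidean (c s - c s₀) i
    simp only [PiLp.sub_apply] at h
    exact h.trans (hlip s₀ hs₀I s hs)
  have htayc : ∀ s ∈ I, ∀ i, |c s i - c s₀ i - (s - s₀) * v i| ≤ ρ * |s - s₀| ^ (1 + γ) := by
    intro s hs i
    have h := abs_apply_le_norm_euclidean (c s - c s₀ - (s - s₀) • v) i
    simp only [PiLp.sub_apply, PiLp.smul_apply, smul_eq_mul] at h
    exact h.trans (htay s hs)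
  have hαpos : ∀ i, 0 < α i := fun i => lt_trans (by positivity) (hα i).1
  have hαlt1 : ∀ i, α i < 1 := fun i => (hα i).2
  have hα1γ : ∀ i, 1 < (1 + γ) * α i := by
    intro i
    have h := (hα i).1
    rw [div_lt_iff₀ h1γ] at h
    linarith [h]
  -- choice of j
  have hvnorm : ‖v‖ = 1 := hunit s₀ hs₀I
  have hvex : ∃ i, v i ≠ 0 := by
    by_contra h
    push_neg at h
    have hv0 : v = 0 := by
      ext i; exact h i
    rw [hv0, norm_zero] at hvnorm
    exact zero_ne_one hvnorm
  set T : Finset (Fin d) := Finset.univ.filter (fun i => v i ≠ 0) with hT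
  have hTne : T.Nonempty := ⟨hvex.choose, by simp [hT, hvex.choose_spec]⟩
  obtain ⟨j, hjT, hjmin⟩ := T.exists_min_image α hTne
  have hvj : v j ≠ 0 := by simpa [hT] using hjT
  have hjmin' : ∀ i, v i ≠ 0 → α j ≤ α i := fun i hi => hjmin i (by simp [hT, hi])
  have hwpos : 0 < |v j| := abs_pos.mpr hvj
  -- per-component Hölder bounds for the fᵢ
  have hfb : ∀ i : Fin d, ∃ ε > (0:ℝ), ∃ M ≥ (0:ℝ), ∀ x, |x - c s₀ i| < ε →
      |f i x - f i (c s₀ i)| ≤ M * |x - c s₀ i| ^ (α i) := by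
    intro i
    obtain ⟨M, hM⟩ := (hf i (c s₀ i)).1
    rw [eventually_nhdsWithin_iff, Metric.eventually_nhds_iff] at hM
    obtain ⟨ε, hε, h⟩ := hM
    refine ⟨ε, hε, max M 0, le_max_right _ _, fun x hx => ?_⟩
    rcases eq_or_ne x (c s₀ i) with rfl | hne
    · simp [Real.zero_rpow (hαpos i).ne']
    · have hq := h (by rwa [Real.dist_eq]) ⟨trivial, hne⟩
      have hpos : 0 < |x - c s₀ i| ^ α i :=
        Real.rpow_pos_of_pos (abs_pos.mpr (sub_ne_zero.mpr hne)) _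
      rw [div_le_iff₀ hpos] at hq
      exact hq.trans (mul_le_mul_of_nonneg_right (le_max_left _ _) hpos.le)
  choose ε hε M hM0 hM using hfb

  -- the radius δ
  have hsplit : ∀ x : ℝ, 0 ≤ x → x ^ (1 + γ) = x ^ γ * x := by
    intro x hx
    rcases eq_or_lt_of_le hx with rfl | hx
    · rw [Real.zero_rpow h1γ.ne', Real.zero_rpow hγ0.ne', zero_mul]
    · rw [Real.rpow_add hx, Real.rpow_one]; ring
  set ε₀ : ℝ := Finset.univ.inf' ⟨j, Finset.mem_univ j⟩ ε with hε₀def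
  have hε₀pos : 0 < ε₀ := by
    rw [hε₀def]; refine (Finset.lt_inf'_iff _).2 ?_
    exact fun i _ => hε i
  have hε₀le : ∀ i, ε₀ ≤ ε i := fun i => Finset.inf'_le _ (Finset.mem_univ i)
  set t₀ : ℝ := (|v j| / (2 * (ρ + 1))) ^ (1/γ) with ht₀def
  have ht₀pos : 0 < t₀ := Real.rpow_pos_of_pos (by positivity) _
  set δ : ℝ := min (min (s₀ - a) (b - s₀)) (min (min 1 (ε₀ / 2)) t₀) with hδdef
  have hδpos : 0 < δ := by
    apply lt_min (lt_min (by linarith) (by linarith)) (lt_min (lt_min one_pos (by positivity)) ht₀pos)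
  have hδ1 : δ ≤ 1 := le_trans (min_le_right _ _) (le_trans (min_le_left _ _) (min_le_left _ _))
  have hδε : ∀ i, δ < ε i := by
    intro i
    have h1 : δ ≤ ε₀ / 2 := le_trans (min_le_right _ _) (le_trans (min_le_left _ _) (min_le_right _ _))
    exact lt_of_le_of_lt h1 (lt_of_lt_of_le (by linarith) (hε₀le i))
  have hδmem : ∀ s, |s - s₀| ≤ δ → s ∈ I := by
    intro s h
    have h1 : δ ≤ s₀ - a := le_trans (min_le_left _ _) (min_le_left _ _)
    have h2 : δ ≤ b - s₀ := le_trans (min_le_left _ _) (min_le_right _ _)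
    have := abs_le.mp h
    exact ⟨by linarith [this.1], by linarith [this.2]⟩
  have hδρ : ∀ s : ℝ, |s - s₀| ≤ δ → ρ * |s - s₀| ^ γ ≤ |v j| / 2 := by
    intro s h
    have ht₀ : t₀ ^ γ = |v j| / (2 * (ρ + 1)) := by
      rw [ht₀def, ← Real.rpow_mul (by positivity), one_div_mul_cancel hγ0.ne', Real.rpow_one]
    have h1 : |s - s₀| ^ γ ≤ t₀ ^ γ :=
      Real.rpow_le_rpow (abs_nonneg _) (h.trans (le_trans (min_le_right _ _) (min_le_right _ _))) hγ0.le
    rw [ht₀] at h1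
    have h2 : ρ * (|v j| / (2 * (ρ + 1))) ≤ |v j| / 2 := by
      rw [← mul_div_assoc, div_le_div_iff₀ (by positivity) two_pos]
      nlinarith [mul_nonneg hρ hwpos.le, hwpos]
    exact le_trans (mul_le_mul_of_nonneg_left h1 hρ) h2
  -- lower bound for the j-th component increment
  have hlow : ∀ s, |s - s₀| ≤ δ → |v j| / 2 * |s - s₀| ≤ |c s j - c s₀ j| := by
    intro s h
    have hs : s ∈ I := hδmem s h
    have h1 := htayc s hs j
    rw [hsplit _ (abs_nonneg _)] at h1
    have h2 : ρ * (|s - s₀| ^ γ * |s - s₀|) ≤ |v j| / 2 * |s - s₀| := by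
      rw [← mul_assoc]
      exact mul_le_mul_of_nonneg_right (hδρ s h) (abs_nonneg _)
    have h3 := abs_sub_abs_le_abs_sub ((s - s₀) * v j) (c s j - c s₀ j)
    rw [abs_sub_comm ((s - s₀) * v j) _] at h3
    have h4 : |(s - s₀) * v j| = |s - s₀| * |v j| := abs_mul _ _
    have h5 := le_trans h1 h2
    nlinarith [abs_nonneg (c s j - c s₀ j), hwpos]

  -- per-component estimates along the curve
  set E : Fin d → ℝ := fun i => if v i = 0 then (1 + γ) * α i else α i with hEdef
  set K : Fin d → ℝ := fun i => if v i = 0 then M i * ρ ^ (α i) else M i with hKdef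
  have hK0 : ∀ i, 0 ≤ K i := by
    intro i
    simp only [hKdef]
    split_ifs with h
    · exact mul_nonneg (hM0 i) (Real.rpow_nonneg hρ _)
    · exact hM0 i
  have hE1 : ∀ i, v i = 0 → 1 ≤ E i := by
    intro i h
    simp only [hEdef, if_pos h]
    exact (hα1γ i).le
  have hEj : ∀ i, α j ≤ E i := by
    intro i
    by_cases h : v i = 0
    · exact le_trans (hαlt1 j).le (hE1 i h)
    · simp only [hEdef, if_neg h]
      exact hjmin' i h
  have hcomp : ∀ s ∈ I, |s - s₀| ≤ δ → ∀ i,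
      |f i (c s i) - f i (c s₀ i)| ≤ K i * |s - s₀| ^ (E i) := by
    intro s hs hsδ i
    have hxε : |c s i - c s₀ i| < ε i := lt_of_le_of_lt (hlipc s hs i) (lt_of_le_of_lt hsδ (hδε i))
    have h0 := hM i (c s i) hxε
    by_cases hvi : v i = 0
    · have h1 : |c s i - c s₀ i| ≤ ρ * |s - s₀| ^ (1 + γ) := by
        have := htayc s hs i
        rwa [hvi, mul_zero, sub_zero] at this
      have h2 : |c s i - c s₀ i| ^ (α i) ≤ (ρ * |s - s₀| ^ (1 + γ)) ^ (α i) :=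
        Real.rpow_le_rpow (abs_nonneg _) h1 (hαpos i).le
      have h3 : (ρ * |s - s₀| ^ (1 + γ)) ^ (α i) = ρ ^ (α i) * |s - s₀| ^ ((1 + γ) * α i) := by
        rw [Real.mul_rpow hρ (Real.rpow_nonneg (abs_nonneg _) _),
          ← Real.rpow_mul (abs_nonneg _)]
      refine h0.trans ?_
      simp only [hKdef, hEdef, if_pos hvi]
      calc M i * |c s i - c s₀ i| ^ α i ≤ M i * (ρ ^ (α i) * |s - s₀| ^ ((1 + γ) * α i)) := by
            rw [← h3]; exact mul_le_mul_of_nonneg_left h2 (hM0 i)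
        _ = M i * ρ ^ α i * |s - s₀| ^ ((1 + γ) * α i) := by ring
    · refine h0.trans ?_
      simp only [hKdef, hEdef, if_neg hvi]
      exact mul_le_mul_of_nonneg_left
        (Real.rpow_le_rpow (abs_nonneg _) (hlipc s hs i) (hαpos i).le) (hM0 i)
  refine ⟨j, ⟨∑ i, K i, ?_⟩, ?_⟩
  · -- upper bound
    rw [eventually_nhdsWithin_iff, Metric.eventually_nhds_iff]
    refine ⟨δ, hδpos, fun s hdist hsmem => ?_⟩
    rw [Real.dist_eq] at hdist
    have hsI : s ∈ I := hsmem.1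
    have hsne : s ≠ s₀ := by
      intro h; exact hsmem.2 (by simp [h])
    have ht0 : 0 < |s - s₀| := abs_pos.mpr (sub_ne_zero.mpr hsne)
    have ht1 : |s - s₀| ≤ 1 := hdist.le.trans hδ1
    have hnum : |∑ i, f i (c s i) - ∑ i, f i (c s₀ i)| ≤ (∑ i, K i) * |s - s₀| ^ (α j) := by
      rw [← Finset.sum_sub_distrib, Finset.sum_mul]
      refine (Finset.abs_sum_le_sum_abs _ _).trans (Finset.sum_le_sum fun i _ => ?_)
      exact (hcomp s hsI hdist.le i).trans
        (mul_le_mul_of_nonneg_left (Real.rpow_le_rpow_of_exponent_ge ht0 ht1 (hEj i)) (hK0 i))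
    rw [div_le_iff₀ (Real.rpow_pos_of_pos ht0 _)]
    simpa [Function.comp] using hnum
  · -- lower bound
    intro β hβ M₀
    set B : ℝ := Finset.univ.inf' ⟨j, Finset.mem_univ j⟩
      (fun i => if v i = 0 ∨ i = j then 1 else α i) with hBdef
    have hBj : α j < B := by
      rw [hBdef]; refine (Finset.lt_inf'_iff _).2 ?_
      intro i _
      split_ifs with h
      · exact hαlt1 j
      · push_neg at h
        exact lt_of_le_of_ne (hjmin' i h.1) (fun he => h.2 (hinj he.symm))
    have hB1 : B ≤ 1 := by
      refine le_trans (Finset.inf'_le _ (Finset.mem_univ j)) ?_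
      simp
    have hBi : ∀ i, v i ≠ 0 → i ≠ j → B ≤ α i := by
      intro i h1 h2
      refine le_trans (Finset.inf'_le _ (Finset.mem_univ i)) ?_
      simp [h1, h2]
    set β' : ℝ := min β B with hβ'def
    have hβ'j : α j < β' := lt_min hβ hBj
    have hβ'β : β' ≤ β := min_le_left _ _
    have hβ'B : β' ≤ B := min_le_right _ _
    have hβ'pos : 0 < β' := lt_trans (hαpos j) hβ'j
    have hβ'1 : β' ≤ 1 := hβ'B.trans hB1
    have hE'β' : ∀ i, i ≠ j → β' ≤ E i := by
      intro i hij
      by_cases h : v i = 0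
      · exact le_trans hβ'1 (hE1 i h)
      · simp only [hEdef, if_neg h]
        exact hβ'B.trans (hBi i h hij)
    set C : ℝ := ∑ i ∈ Finset.univ.erase j, K i with hCdef
    have hC0 : 0 ≤ C := Finset.sum_nonneg fun i _ => hK0 i
    set M' : ℝ := (max M₀ 0 + C + 1) * (2 / |v j|) ^ β' with hM'def
    have hM'0 : 0 ≤ M' := by positivity
    rw [frequently_iff]
    intro U hU
    obtain ⟨V, hVopen, hV₀, hVU⟩ := mem_nhdsWithin.mp hU
    obtain ⟨ε₁, hε₁, hball⟩ := Metric.isOpen_iff.mp hVopen s₀ hV₀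
    set r : ℝ := min ε₁ δ with hrdef
    have hrpos : 0 < r := lt_min hε₁ hδpos
    have hfreq := (hf j (c s₀ j)).2 β' hβ'j M'
    rw [frequently_iff] at hfreq
    have hUmem : Metric.ball (c s₀ j) (|v j| / 2 * r) ∩ (univ \ {c s₀ j}) ∈
        𝓝[univ \ {c s₀ j}] (c s₀ j) :=
      inter_mem (mem_nhdsWithin_of_mem_nhds (Metric.ball_mem_nhds _ (by positivity)))
        self_mem_nhdsWithin
    obtain ⟨x, ⟨hxball, hxmem⟩, hxq⟩ := hfreq hUmem
    have hxne : x ≠ c s₀ j := hxmem.2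
    rw [Metric.mem_ball, Real.dist_eq] at hxball
    -- find s with c s j = x
    have hδsub : Icc (s₀ - δ) (s₀ + δ) ⊆ I := by
      intro t ht
      refine hδmem t ?_
      rw [abs_le]
      constructor <;> [linarith [ht.1]; linarith [ht.2]]
    have hφcont : ContinuousOn (fun s => c s j) (uIcc (s₀ - δ) (s₀ + δ)) := by
      have h1 : ContinuousOn c (uIcc (s₀ - δ) (s₀ + δ)) := by
        refine (hc.continuousOn).mono ?_
        rw [uIcc_of_le (by linarith)]
        exact hδsub
      exact (EuclideanSpace.proj j).continuous.comp_continuousOn h1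
    have hmemδ : ∀ (u : ℝ), |u| ≤ δ → |(s₀ + u) - s₀| ≤ δ := by
      intro u hu; simpa using hu
    have hendp : ∀ (u : ℝ), |u| = δ →
        |c (s₀ + u) j - c s₀ j - u * v j| ≤ |v j| / 2 * δ := by
      intro u hu
      have h1 : |(s₀ + u) - s₀| ≤ δ := by rw [add_sub_cancel_left, hu]
      have h2 := htayc (s₀ + u) (hδmem _ h1) j
      rw [add_sub_cancel_left] at h2
      rw [hsplit _ (abs_nonneg u), hu] at h2
      refine h2.trans ?_
      have := hδρ (s₀ + u) (by rw [add_sub_cancel_left, hu])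
      rw [add_sub_cancel_left, hu] at this
      calc ρ * (δ ^ γ * δ) = ρ * δ ^ γ * δ := by ring
        _ ≤ |v j| / 2 * δ := mul_le_mul_of_nonneg_right this hδpos.le
    have hxuIcc : x ∈ uIcc (c (s₀ - δ) j) (c (s₀ + δ) j) := by
      have hp := hendp (-δ) (by rw [abs_neg, abs_of_pos hδpos])
      have hq := hendp δ (abs_of_pos hδpos)
      rw [show s₀ + -δ = s₀ - δ by ring] at hp
      have hxd : |x - c s₀ j| < |v j| / 2 * δ :=
        lt_of_lt_of_le hxball (mul_le_mul_of_nonneg_left (min_le_right _ _) (by positivity))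
      rw [mem_uIcc]
      rcases hvj.lt_or_gt with hw | hw
      · rw [abs_of_neg hw] at hp hq hxd
        right
        have h := holder_aux_between (p := -(c (s₀ - δ) j)) (q := -(c (s₀ + δ) j))
          (z := -(c s₀ j)) (x := -x) (w := -(v j)) hδpos (neg_pos.mpr hw)
          (by rw [show -(c (s₀ - δ) j) - -(c s₀ j) - (-δ) * -(v j) =
              -(c (s₀ - δ) j - c s₀ j - (-δ) * v j) by ring, abs_neg]; exact hp)
          (by rw [show -(c (s₀ + δ) j) - -(c s₀ j) - δ * -(v j) =
              -(c (s₀ + δ) j - c s₀ j - δ * v j) by ring, abs_neg]; exact hq)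
          (by rw [show -x - -(c s₀ j) = -(x - c s₀ j) by ring, abs_neg]; exact hxd)
        exact ⟨by linarith [h.1], by linarith [h.2]⟩
      · rw [abs_of_pos hw] at hp hq hxd
        left
        exact holder_aux_between hδpos hw hp hq hxd
    obtain ⟨s, hsu, hcs⟩ := intermediate_value_uIcc hφcont hxuIcc
    rw [uIcc_of_le (by linarith)] at hsu
    have hsδ : |s - s₀| ≤ δ := by
      rw [abs_le]; constructor <;> [linarith [hsu.1]; linarith [hsu.2]]
    have hsI : s ∈ I := hδmem s hsδ
    have hcsx : c s j = x := hcs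
    have hsne : s ≠ s₀ := by
      intro h; rw [h] at hcsx; exact hxne hcsx.symm
    have ht0 : 0 < |s - s₀| := abs_pos.mpr (sub_ne_zero.mpr hsne)
    have ht1 : |s - s₀| ≤ 1 := hsδ.trans hδ1
    have hlow' : |v j| / 2 * |s - s₀| ≤ |x - c s₀ j| := by
      have h := hlow s hsδ
      rwa [hcsx] at h
    have hsr : |s - s₀| < r := by
      have h := lt_of_le_of_lt hlow' hxball
      exact lt_of_mul_lt_mul_left h (by positivity)
    have hsU : s ∈ U := by
      refine hVU ⟨hball ?_, hsI, by simp [hsne]⟩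
      rw [Metric.mem_ball, Real.dist_eq]
      exact lt_of_lt_of_le hsr (min_le_left _ _)
    refine ⟨s, hsU, ?_⟩
    have hxpos : 0 < |x - c s₀ j| := abs_pos.mpr (sub_ne_zero.mpr hxne)
    rw [lt_div_iff₀ (Real.rpow_pos_of_pos hxpos _)] at hxq
    have hkey : (max M₀ 0 + C + 1) * |s - s₀| ^ β' < |f j (c s j) - f j (c s₀ j)| := by
      rw [hcsx]
      refine lt_of_le_of_lt ?_ hxq
      have h1 : (|v j| / 2 * |s - s₀|) ^ β' ≤ |x - c s₀ j| ^ β' :=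
        Real.rpow_le_rpow (by positivity) hlow' hβ'pos.le
      have h2 : (|v j| / 2 * |s - s₀|) ^ β' = (|v j| / 2) ^ β' * |s - s₀| ^ β' :=
        Real.mul_rpow (by positivity) (abs_nonneg _)
      have h3 : (2 / |v j|) ^ β' * (|v j| / 2) ^ β' = 1 := by
        rw [← Real.mul_rpow (by positivity) (by positivity),
          show (2 / |v j|) * (|v j| / 2) = 1 by field_simp]
        exact Real.one_rpow _
      calc (max M₀ 0 + C + 1) * |s - s₀| ^ β'
          = (max M₀ 0 + C + 1) * ((2 / |v j|) ^ β' * (|v j| / 2) ^ β') * |s - s₀| ^ β' := by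
            rw [h3, mul_one]
        _ = M' * ((|v j| / 2) ^ β' * |s - s₀| ^ β') := by rw [hM'def]; ring
        _ = M' * (|v j| / 2 * |s - s₀|) ^ β' := by rw [h2]
        _ ≤ M' * |x - c s₀ j| ^ β' := mul_le_mul_of_nonneg_left h1 hM'0
    have hrest : |∑ i ∈ Finset.univ.erase j, (f i (c s i) - f i (c s₀ i))| ≤
        C * |s - s₀| ^ β' := by
      rw [hCdef, Finset.sum_mul]
      refine (Finset.abs_sum_le_sum_abs _ _).trans (Finset.sum_le_sum fun i hi => ?_)
      have hij := (Finset.mem_erase.mp hi).1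
      exact (hcomp s hsI hsδ i).trans
        (mul_le_mul_of_nonneg_left
          (Real.rpow_le_rpow_of_exponent_ge ht0 ht1 (hE'β' i hij)) (hK0 i))
    have hsum : ∑ i, (f i (c s i) - f i (c s₀ i)) =
        (f j (c s j) - f j (c s₀ j)) +
          ∑ i ∈ Finset.univ.erase j, (f i (c s i) - f i (c s₀ i)) :=
      (Finset.add_sum_erase _ _ (Finset.mem_univ j)).symm
    have htot : (max M₀ 0 + 1) * |s - s₀| ^ β' < |∑ i, (f i (c s i) - f i (c s₀ i))| := by
      have h5 : f j (c s j) - f j (c s₀ j) =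
          (∑ i, (f i (c s i) - f i (c s₀ i))) +
            -(∑ i ∈ Finset.univ.erase j, (f i (c s i) - f i (c s₀ i))) := by
        rw [hsum]; ring
      have h4 : |f j (c s j) - f j (c s₀ j)| ≤
          |∑ i, (f i (c s i) - f i (c s₀ i))| +
            |∑ i ∈ Finset.univ.erase j, (f i (c s i) - f i (c s₀ i))| := by
        rw [h5]
        exact (abs_add_le _ _).trans (by rw [abs_neg])
      linarith [hkey, hrest]
    have hββ' : |s - s₀| ^ β ≤ |s - s₀| ^ β' :=
      Real.rpow_le_rpow_of_exponent_ge ht0 ht1 hβ'β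
    have hβpos : 0 < |s - s₀| ^ β := Real.rpow_pos_of_pos ht0 _
    rw [lt_div_iff₀ hβpos]
    have hcomp' : ((fun x : EuclideanSpace ℝ (Fin d) => ∑ i, f i (x i)) ∘ c) s -
        ((fun x : EuclideanSpace ℝ (Fin d) => ∑ i, f i (x i)) ∘ c) s₀ =
        ∑ i, (f i (c s i) - f i (c s₀ i)) := by
      simp [Function.comp, Finset.sum_sub_distrib]
    rw [hcomp']
    have hM₀' : M₀ * |s - s₀| ^ β ≤ max M₀ 0 * |s - s₀| ^ β' :=
      le_trans (mul_le_mul_of_nonneg_right (le_max_left _ _) hβpos.le)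
        (mul_le_mul_of_nonneg_left hββ' (le_max_right _ _))
    have hppos : 0 < |s - s₀| ^ β' := Real.rpow_pos_of_pos ht0 _
    linarith [htot, hM₀', hppos]
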